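/- Suppose Θ is a Polish space (e.g. a Borel subset of ℝ^n with its subspace topology), p is a Borel probability measure on Θ, g : Θ → ℝ^m is Borel measurable, and there exists a Borel restricted domain Θ_max of maximal probability, i.e. p(Θ_max) ≥ p(S) for every Borel restricted domain S. Then there exists a set Θ' ⊆ Θ, measurable with respect to the completion of p, such that g is injective on Θ', p(Θ') = p(Θ_max), and g(Θ') = g(Θ); in particular p({θ ∈ Θ : g(θ) ∉ g(Θ')}) = 0, i.e. the image of this largest restricted domain equals the full response set g(Θ) up to a set of zero probability. -/

import Mathlib

open MeasureTheory Set
open scoped ENNReal NNReal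

/-- Ulam tightness: a finite Borel measure on a Polish space is inner regular by compact sets,
in the weak form we need. -/
lemma aux_tight {X : Type*} [TopologicalSpace X] [PolishSpace X] [MeasurableSpace X] [BorelSpace X]
    (p : Measure X) [IsFiniteMeasure p] {B : Set X} (hB : MeasurableSet B) {ε : ℝ≥0∞}
    (hε : ε ≠ 0) : ∃ K, K ⊆ B ∧ IsCompact K ∧ p (B \ K) ≤ ε := by
  classical
  letI := TopologicalSpace.upgradeIsCompletelyMetrizable X
  rcases isEmpty_or_nonempty X with h | h
  · refine ⟨∅, empty_subset _, isCompact_empty, ?_⟩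
    simp [Set.eq_empty_of_isEmpty (B \ ∅)]
  obtain ⟨F, hFB, hFclosed, hFdiff⟩ := hB.exists_isClosed_diff_lt (measure_ne_top p B)
    (ENNReal.half_pos hε).ne'
  obtain ⟨u, hu⟩ := TopologicalSpace.exists_dense_seq X
  -- the truncated covers by closed balls of radius (n+1)⁻¹
  have hcov : ∀ n : ℕ, ∃ k : ℕ,
      p (F \ ⋃ i ∈ Finset.range k, Metric.closedBall (u i) (((n : ℝ) + 1)⁻¹))
        ≤ ε / 2 * (2 : ℝ≥0∞)⁻¹ ^ (n + 1) := by
    intro n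
    set V : ℕ → Set X := fun k => ⋃ i ∈ Finset.range k, Metric.closedBall (u i) (((n : ℝ) + 1)⁻¹)
      with hV
    have hVmeas : ∀ k, MeasurableSet (V k) := by
      intro k
      exact (Set.Finite.isClosed_biUnion (Finset.range k).finite_toSet
        (fun i _ => Metric.isClosed_closedBall)).measurableSet
    have hVmono : Monotone V := by
      intro a b hab x hx
      rw [Set.mem_iUnion₂] at hx ⊢
      obtain ⟨i, hi, hxi⟩ := hx
      exact ⟨i, Finset.mem_range.mpr (lt_of_lt_of_le (Finset.mem_range.mp hi) hab), hxi⟩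
    have hiInter : ⋂ k, (F \ V k) = ∅ := by
      rw [Set.eq_empty_iff_forall_notMem]
      intro x hx
      obtain ⟨i, hi⟩ := hu.exists_dist_lt x (by positivity : (0:ℝ) < ((n : ℝ) + 1)⁻¹)
      have hxV : x ∈ V (i + 1) := by
        refine Set.mem_biUnion (Finset.self_mem_range_succ i) ?_
        rw [Metric.mem_closedBall]
        exact hi.le
      exact (Set.mem_iInter.mp hx (i + 1)).2 hxV
    have htend : Filter.Tendsto (fun k => p (F \ V k)) Filter.atTop (nhds 0) := by
      have := MeasureTheory.tendsto_measure_iInter_atTop (μ := p)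
        (fun k => (hFclosed.measurableSet.diff (hVmeas k)).nullMeasurableSet)
        (fun a b hab => Set.diff_subset_diff_right (hVmono hab))
        ⟨0, measure_ne_top _ _⟩
      rwa [hiInter, measure_empty] at this
    have hpos : (0 : ℝ≥0∞) < ε / 2 * (2 : ℝ≥0∞)⁻¹ ^ (n + 1) :=
      ENNReal.mul_pos (ENNReal.half_pos hε).ne'
        (pow_ne_zero _ (ENNReal.inv_ne_zero.mpr ENNReal.ofNat_ne_top))
    obtain ⟨k, hk⟩ := (htend.eventually_lt_const hpos).exists
    exact ⟨k, hk.le⟩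
  choose k hk using hcov
  set W : ℕ → Set X := fun n =>
    ⋃ i ∈ Finset.range (k n), Metric.closedBall (u i) (((n : ℝ) + 1)⁻¹) with hW
  refine ⟨F ∩ ⋂ n, W n, fun x hx => hFB hx.1, ?_, ?_⟩
  · -- compactness
    have hWclosed : ∀ n, IsClosed (W n) := fun n =>
      Set.Finite.isClosed_biUnion (Finset.range (k n)).finite_toSet
        (fun i _ => Metric.isClosed_closedBall)
    have hclosed : IsClosed (F ∩ ⋂ n, W n) :=
      hFclosed.inter (isClosed_iInter hWclosed)
    refine TotallyBounded.isCompact_of_isClosed ?_ hclosed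
    rw [Metric.totallyBounded_iff]
    intro δ hδ
    obtain ⟨n, hn⟩ := exists_nat_one_div_lt hδ
    refine ⟨u '' (Finset.range (k n) : Set ℕ), (Finset.range (k n)).finite_toSet.image u, ?_⟩
    intro x hx
    have hxW : x ∈ W n := (Set.mem_iInter.mp hx.2) n
    simp only [hW, Set.mem_iUnion] at hxW
    obtain ⟨i, hi, hxi⟩ := hxW
    have : dist x (u i) < δ := by
      rw [Metric.mem_closedBall] at hxi
      calc dist x (u i) ≤ ((n : ℝ) + 1)⁻¹ := hxi
        _ = 1 / ((n : ℝ) + 1) := by rw [one_div]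
        _ < δ := hn
    exact Set.mem_biUnion (Set.mem_image_of_mem u hi) (Metric.mem_ball.mpr this)
  · -- measure bound
    have hsub : B \ (F ∩ ⋂ n, W n) ⊆ (B \ F) ∪ ⋃ n, (F \ W n) := by
      intro x hx
      by_cases hxF : x ∈ F
      · right
        have : ¬ x ∈ ⋂ n, W n := fun hmem => hx.2 ⟨hxF, hmem⟩
        rw [Set.mem_iInter, not_forall] at this
        obtain ⟨n, hn⟩ := this
        exact Set.mem_iUnion.mpr ⟨n, hxF, hn⟩
      · exact Or.inl ⟨hx.1, hxF⟩
    calc p (B \ (F ∩ ⋂ n, W n)) ≤ p ((B \ F) ∪ ⋃ n, (F \ W n)) := measure_mono hsub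
      _ ≤ p (B \ F) + p (⋃ n, (F \ W n)) := measure_union_le _ _
      _ ≤ ε / 2 + ∑' n, p (F \ W n) := add_le_add hFdiff.le (measure_iUnion_le _)
      _ ≤ ε / 2 + ∑' n : ℕ, ε / 2 * (2 : ℝ≥0∞)⁻¹ ^ (n + 1) := by
          gcongr with n
          exact hk n
      _ = ε / 2 + ε / 2 := by
          congr 1
          rw [ENNReal.tsum_mul_left]
          have h1 : ∑' n : ℕ, (2 : ℝ≥0∞)⁻¹ ^ (n + 1) = 1 := by
            have := ENNReal.tsum_geometric (2 : ℝ≥0∞)⁻¹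
            calc ∑' n : ℕ, (2 : ℝ≥0∞)⁻¹ ^ (n + 1)
                = ∑' n : ℕ, (2 : ℝ≥0∞)⁻¹ ^ n * 2⁻¹ := by
                  congr 1; ext n; rw [pow_succ]
              _ = (1 - 2⁻¹)⁻¹ * 2⁻¹ := by rw [ENNReal.tsum_mul_right, this]
              _ = 1 := by
                  rw [ENNReal.one_sub_inv_two, inv_inv]
                  exact ENNReal.mul_inv_cancel two_ne_zero ENNReal.ofNat_ne_top
          rw [h1, mul_one]
      _ = ε := ENNReal.add_halves ε

/-- Borel selection on a compact set: if `g` is continuous and `φ` is a continuous injection into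
`ℝ`, then any compact `K` contains a Borel subset on which `g` is injective with the same image. -/
lemma aux_compact_section {X Y : Type*} [TopologicalSpace X] [PolishSpace X] [MeasurableSpace X]
    [BorelSpace X] [TopologicalSpace Y] [T2Space Y]
    {g : X → Y} (hg : Continuous g) {φ : X → ℝ} (hφ : Continuous φ)
    (hφi : Function.Injective φ) {K : Set X} (hK : IsCompact K) :
    ∃ S, S ⊆ K ∧ MeasurableSet S ∧ Set.InjOn g S ∧ g '' S = g '' K := by
  classical
  set C : ℕ → Set (X × X) := fun n =>
    (K ×ˢ K) ∩ {q | g q.2 = g q.1 ∧ φ q.2 + ((n : ℝ) + 1)⁻¹ ≤ φ q.1} with hC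
  have hCc : ∀ n, IsCompact (C n) := by
    intro n
    refine (hK.prod hK).inter_right ?_
    exact (isClosed_eq (hg.comp continuous_snd) (hg.comp continuous_fst)).inter
      (isClosed_le (by continuity) (hφ.comp continuous_fst))
  set Bad : Set X := ⋃ n, Prod.fst '' C n with hBadDef
  have hBadmeas : MeasurableSet Bad :=
    MeasurableSet.iUnion fun n => ((hCc n).image continuous_fst).measurableSet
  have hBad : ∀ a, a ∈ Bad ↔ a ∈ K ∧ ∃ b ∈ K, g b = g a ∧ φ b < φ a := by
    intro a
    constructor
    · rintro hmem
      rw [hBadDef, Set.mem_iUnion] at hmem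
      obtain ⟨n, q, ⟨⟨hq1, hq2⟩, hgq, hφq⟩, rfl⟩ := hmem
      refine ⟨hq1, q.2, hq2, hgq, ?_⟩
      have : (0 : ℝ) < ((n : ℝ) + 1)⁻¹ := by positivity
      linarith
    · rintro ⟨haK, b, hbK, hgb, hφb⟩
      obtain ⟨n, hn⟩ := exists_nat_one_div_lt (by linarith : (0:ℝ) < φ a - φ b)
      rw [hBadDef, Set.mem_iUnion]
      refine ⟨n, (a, b), ⟨⟨haK, hbK⟩, hgb, ?_⟩, rfl⟩
      rw [one_div] at hn
      linarith
  refine ⟨K \ Bad, Set.diff_subset, (hK.isClosed.measurableSet).diff hBadmeas, ?_, ?_⟩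
  · intro a ha b hb hab
    have h1 : ¬ φ b < φ a := fun hlt => ha.2 ((hBad a).mpr ⟨ha.1, b, hb.1, hab.symm, hlt⟩)
    have h2 : ¬ φ a < φ b := fun hlt => hb.2 ((hBad b).mpr ⟨hb.1, a, ha.1, hab, hlt⟩)
    exact hφi (le_antisymm (not_lt.mp h1) (not_lt.mp h2))
  · apply Set.Subset.antisymm (Set.image_mono Set.diff_subset)
    rintro y ⟨a, haK, rfl⟩
    have hfibc : IsCompact (K ∩ g ⁻¹' {g a}) :=
      hK.inter_right (IsClosed.preimage hg isClosed_singleton)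
    obtain ⟨x₀, hx₀, hmin⟩ := hfibc.exists_isMinOn ⟨a, haK, rfl⟩ (hφ.continuousOn)
    have hgx₀ : g x₀ = g a := hx₀.2
    refine ⟨x₀, ⟨hx₀.1, fun hbad => ?_⟩, hgx₀⟩
    obtain ⟨_, b, hbK, hgb, hφb⟩ := (hBad x₀).mp hbad
    have : φ x₀ ≤ φ b := hmin ⟨hbK, by simp [hgb, hgx₀]⟩
    linarith

/-- There is a Borel `p`-null set `N` meeting every fiber of `g` over `B`, provided every Borel
partial section inside `B` is `p`-null. -/
lemma aux_null_cover {X Y : Type*} [TopologicalSpace X] [PolishSpace X] [MeasurableSpace X]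
    [BorelSpace X] [TopologicalSpace Y] [T2Space Y]
    (p : Measure X) [IsFiniteMeasure p]
    {g : X → Y} (hg : Continuous g) {φ : X → ℝ} (hφ : Continuous φ)
    (hφi : Function.Injective φ) {B : Set X} (hB : MeasurableSet B)
    (hnull : ∀ S, MeasurableSet S → S ⊆ B → Set.InjOn g S → p S = 0) :
    ∃ N, MeasurableSet N ∧ p N = 0 ∧ ∀ θ ∈ B, ∃ θ' ∈ N, g θ' = g θ := by
  classical
  have htight : ∀ n : ℕ, ∃ K, K ⊆ B ∧ IsCompact K ∧ p (B \ K) ≤ ((n : ℝ≥0∞) + 1)⁻¹ := by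
    intro n
    exact aux_tight p hB (by simp)
  choose K hKB hKc hKle using htight
  have hsec : ∀ n : ℕ, ∃ S, S ⊆ K n ∧ MeasurableSet S ∧ Set.InjOn g S ∧ g '' S = g '' (K n) :=
    fun n => aux_compact_section hg hφ hφi (hKc n)
  choose S hSK hSmeas hSinj hSimg using hsec
  refine ⟨(B \ ⋃ n, K n) ∪ ⋃ n, S n, ?_, ?_, ?_⟩
  · exact (hB.diff (MeasurableSet.iUnion fun n => (hKc n).isClosed.measurableSet)).union
      (MeasurableSet.iUnion hSmeas)
  · have h1 : p (B \ ⋃ n, K n) = 0 := by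
      by_contra hne
      obtain ⟨n, hn⟩ := ENNReal.exists_inv_nat_lt hne
      have hle : p (B \ ⋃ m, K m) ≤ ((n : ℝ≥0∞) + 1)⁻¹ :=
        le_trans (measure_mono (Set.diff_subset_diff_right (Set.subset_iUnion K n))) (hKle n)
      have : ((n : ℝ≥0∞) + 1)⁻¹ ≤ (n : ℝ≥0∞)⁻¹ := by
        gcongr
        exact le_self_add
      exact absurd (hle.trans this) (not_le.mpr hn)
    have h2 : p (⋃ n, S n) = 0 := by
      refine measure_iUnion_null fun n => ?_
      exact hnull (S n) (hSmeas n) ((hSK n).trans (hKB n)) (hSinj n)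
    refine le_antisymm ?_ zero_le'
    calc p ((B \ ⋃ n, K n) ∪ ⋃ n, S n) ≤ p (B \ ⋃ n, K n) + p (⋃ n, S n) := measure_union_le _ _
      _ = 0 := by rw [h1, h2, add_zero]
  · intro θ hθ
    by_cases hθK : θ ∈ ⋃ n, K n
    · obtain ⟨n, hn⟩ := Set.mem_iUnion.mp hθK
      have : g θ ∈ g '' (S n) := by rw [hSimg n]; exact ⟨θ, hn, rfl⟩
      obtain ⟨θ', hθ', hθ'g⟩ := this
      exact ⟨θ', Set.mem_union_right _ (Set.mem_iUnion.mpr ⟨n, hθ'⟩), hθ'g⟩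
    · exact ⟨θ, Set.mem_union_left _ ⟨hθ, hθK⟩, rfl⟩

/-- If `Θ` is a Polish space, `p` a Borel probability measure on it, `g` Borel measurable, and
`Θmax` is a Borel restricted domain of maximal probability (a Borel set on which `g` is
injective, with `p Θmax ≥ p S` for every Borel set `S` with `g` injective on `S`), then there
is a set `Θ'` (measurable for the completion of `p`, i.e. null-measurable) with `g` injective
on `Θ'`, `p Θ' = p Θmax`, and `g '' Θ' = g '' univ = range g`; in particular
`p {θ : g θ ∉ g '' Θ'} = 0`, i.e. the image of this largest restricted domain is the full
response set up to a `p`-null set. -/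
theorem image_of_largest_restricted_domain_is_full {m : ℕ}
    (Θ : Type*) [TopologicalSpace Θ] [PolishSpace Θ] [MeasurableSpace Θ] [BorelSpace Θ]
    (p : Measure Θ) [IsProbabilityMeasure p]
    (g : Θ → EuclideanSpace ℝ (Fin m)) (hg : Measurable g)
    (Θmax : Set Θ) (hmeas : MeasurableSet Θmax) (hinj : Set.InjOn g Θmax)
    (hmaximal : ∀ S : Set Θ, MeasurableSet S → Set.InjOn g S → p S ≤ p Θmax) :
    ∃ Θ' : Set Θ, NullMeasurableSet Θ' p ∧ Set.InjOn g Θ' ∧ p Θ' = p Θmax ∧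
      g '' Θ' = Set.range g ∧ p {θ | g θ ∉ g '' Θ'} = 0 := by
  classical
  let tΘ : TopologicalSpace Θ := ‹_›
  have hPΘ : @PolishSpace Θ tΘ := ‹PolishSpace Θ›
  have hΘne : Nonempty Θ := by
    by_contra h
    rw [not_nonempty_iff] at h
    have h1 : p Set.univ = 1 := measure_univ
    rw [Set.univ_eq_empty_iff.mpr h, measure_empty] at h1
    exact zero_ne_one h1
  -- the image of Θmax is Borel by Lusin–Souslin
  have hgim : MeasurableSet (g '' Θmax) := hmeas.image_of_measurable_injOn hg hinj
  set B : Set Θ := g ⁻¹' (g '' Θmax)ᶜ with hBdef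
  have hBmeas : MeasurableSet B := hg hgim.compl
  have hBg : ∀ θ ∈ B, g θ ∉ g '' Θmax := fun θ hθ => hθ
  -- every Borel partial section inside B is null
  have hnull : ∀ S : Set Θ, MeasurableSet S → S ⊆ B → Set.InjOn g S → p S = 0 := by
    intro S hSmeas hSB hSinj
    have hdisj : Disjoint Θmax S := by
      rw [Set.disjoint_left]
      intro θ hθ1 hθ2
      exact hBg θ (hSB hθ2) ⟨θ, hθ1, rfl⟩
    have hUinj : Set.InjOn g (Θmax ∪ S) := by
      rintro a (ha | ha) b (hb | hb) hab
      · exact hinj ha hb hab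
      · exact absurd (⟨a, ha, hab⟩ : g b ∈ g '' Θmax) (hBg b (hSB hb))
      · exact absurd (⟨b, hb, hab.symm⟩ : g a ∈ g '' Θmax) (hBg a (hSB ha))
      · exact hSinj ha hb hab
    have hle := hmaximal (Θmax ∪ S) (hmeas.union hSmeas) hUinj
    rw [measure_union hdisj hSmeas] at hle
    have := (ENNReal.add_le_add_iff_left (measure_ne_top p Θmax)).mp
      (by simpa using hle : p Θmax + p S ≤ p Θmax + 0)
    exact le_antisymm this zero_le'
  -- a measurable embedding into ℝ
  obtain ⟨φ, hφemb⟩ := exists_measurableEmbedding_real Θ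
  -- refine the topology so that both g and φ are continuous
  have hF : Measurable (fun θ => (g θ, φ θ) : Θ → (EuclideanSpace ℝ (Fin m)) × ℝ) :=
    hg.prodMk hφemb.measurable
  obtain ⟨t', ht'le, hFcont, ht'polish⟩ := hF.exists_continuous
  have hborel_eq : @borel Θ t' = @borel Θ tΘ :=
    @borel_eq_borel_of_le Θ t' tΘ ht'polish hPΘ ht'le
  have hBorel' : @BorelSpace Θ t' ‹MeasurableSpace Θ› := by
    constructor
    rw [hborel_eq]
    exact BorelSpace.measurable_eq
  have hgc : @Continuous Θ _ t' _ g := by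
    have : @Continuous Θ _ t' _ (fun θ => ((g θ, φ θ) : (EuclideanSpace ℝ (Fin m)) × ℝ).1) :=
      Continuous.comp continuous_fst hFcont
    exact this
  have hφc : @Continuous Θ _ t' _ φ := by
    have : @Continuous Θ _ t' _ (fun θ => ((g θ, φ θ) : (EuclideanSpace ℝ (Fin m)) × ℝ).2) :=
      Continuous.comp continuous_snd hFcont
    exact this
  obtain ⟨N, hNmeas, hNnull, hNcov⟩ :=
    @aux_null_cover Θ (EuclideanSpace ℝ (Fin m)) t' ht'polish _ hBorel' _ _ p _
      g hgc φ hφc hφemb.injective B hBmeas hnull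
  -- choose one point of N in each fiber over `range g \ g '' Θmax`
  set R : Set (EuclideanSpace ℝ (Fin m)) := Set.range g \ g '' Θmax with hRdef
  have hcovR : ∀ y ∈ R, ∃ θ, θ ∈ N ∧ g θ = y := by
    rintro y ⟨⟨θ₀, rfl⟩, hy2⟩
    obtain ⟨θ', hθ'N, hθ'g⟩ := hNcov θ₀ hy2
    exact ⟨θ', hθ'N, hθ'g⟩
  let e : EuclideanSpace ℝ (Fin m) → Θ := fun y =>
    if h : ∃ θ, θ ∈ N ∧ g θ = y then h.choose else Classical.arbitrary Θ
  have he : ∀ y ∈ R, e y ∈ N ∧ g (e y) = y := by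
    intro y hy
    have h := hcovR y hy
    simp only [e, dif_pos h]
    exact h.choose_spec
  set T : Set Θ := e '' R with hTdef
  have hTN : T ⊆ N := by
    rintro t ⟨y, hy, rfl⟩
    exact (he y hy).1
  have hTnull : p T = 0 := le_antisymm (le_trans (measure_mono hTN) hNnull.le) zero_le'
  have hTg : ∀ t ∈ T, g t ∈ R := by
    rintro t ⟨y, hy, rfl⟩
    rw [(he y hy).2]
    exact hy
  have himg : g '' (Θmax ∪ T) = Set.range g := by
    apply Set.Subset.antisymm
    · rintro y ⟨θ, _, rfl⟩
      exact ⟨θ, rfl⟩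
    · rintro y ⟨θ, rfl⟩
      by_cases h : g θ ∈ g '' Θmax
      · obtain ⟨a, ha, hag⟩ := h
        exact ⟨a, Or.inl ha, hag⟩
      · have hyR : g θ ∈ R := ⟨⟨θ, rfl⟩, h⟩
        exact ⟨e (g θ), Or.inr ⟨g θ, hyR, rfl⟩, (he (g θ) hyR).2⟩
  refine ⟨Θmax ∪ T, ?_, ?_, ?_, himg, ?_⟩
  · exact hmeas.nullMeasurableSet.union (NullMeasurableSet.of_null hTnull)
  · rintro a (ha | ha) b (hb | hb) hab
    · exact hinj ha hb hab
    · exact absurd (hab ▸ (⟨a, ha, rfl⟩ : g a ∈ g '' Θmax)) (hTg b hb).2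
    · exact absurd (hab ▸ (⟨b, hb, rfl⟩ : g b ∈ g '' Θmax)) ((hTg a ha).2 ∘ (hab ▸ ·))
    · obtain ⟨y₁, hy₁, rfl⟩ := ha
      obtain ⟨y₂, hy₂, rfl⟩ := hb
      rw [(he y₁ hy₁).2, (he y₂ hy₂).2] at hab
      rw [hab]
  · refine le_antisymm ?_ (measure_mono Set.subset_union_left)
    calc p (Θmax ∪ T) ≤ p Θmax + p T := measure_union_le _ _
      _ = p Θmax := by rw [hTnull, add_zero]
  · have hempty : {θ | g θ ∉ g '' (Θmax ∪ T)} = (∅ : Set Θ) := by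
      ext θ
      simp [himg]
    rw [hempty, measure_empty]
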